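/- Let E : ℝ≥0 → ℝ≥0 be a function and C₀, T > 0 constants such that for all t ≥ 0, ∫_t^∞ E(s) ds ≤ T·E(t) + C₀. Then for all t ≥ 0, ∫_t^∞ E(s) ds ≤ T·E(0)·exp(-t/T) + C₀. -/

import Mathlib

open MeasureTheory Real Filter Topology

theorem stmt_0 (E : ℝ → ℝ) (T C₀ : ℝ) (hT : 0 < T) (hC₀ : 0 < C₀)
    (hEnn : ∀ t, 0 ≤ t → 0 ≤ E t)
    (hEint : ∀ t, 0 ≤ t → IntegrableOn E (Set.Ici t))
    (hyp : ∀ t, 0 ≤ t → ∫ s in Set.Ici t, E s ≤ T * E t + C₀) :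
    ∀ t, 0 ≤ t → ∫ s in Set.Ici t, E s ≤ T * E 0 * Real.exp (-t / T) + C₀ := by
  set F : ℝ → ℝ := fun t => ∫ s in Set.Ici (max t 0), E s with hFdef
  have hFt : ∀ t : ℝ, 0 ≤ t → F t = ∫ s in Set.Ici t, E s := by
    intro t ht; simp [hFdef, max_eq_left ht]
  have hsplit : ∀ a b : ℝ, 0 ≤ a → a ≤ b →
      (∫ s in Set.Ici a, E s) = (∫ s in Set.Ico a b, E s) + ∫ s in Set.Ici b, E s := by
    intro a b ha hab
    rw [← Set.Ico_union_Ici_eq_Ici hab]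
    exact setIntegral_union ((Set.Iio_disjoint_Ici le_rfl).mono_left Set.Ico_subset_Iio_self)
      measurableSet_Ici ((hEint a ha).mono_set Set.Ico_subset_Ici_self)
      (hEint b (ha.trans hab))
  have hFanti : Antitone F := by
    intro a b hab
    have h0a : (0:ℝ) ≤ max a 0 := le_max_right _ _
    have hmab : max a 0 ≤ max b 0 := max_le_max hab le_rfl
    have hs := hsplit (max a 0) (max b 0) h0a hmab
    have hnn : 0 ≤ ∫ s in Set.Ico (max a 0) (max b 0), E s :=
      setIntegral_nonneg measurableSet_Ico (fun s hs => hEnn s (h0a.trans hs.1))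
    simp only [hFdef]
    rw [hs]; linarith
  have hFmeas : Measurable F := hFanti.measurable
  have hFint : ∀ a b : ℝ, IntegrableOn F (Set.Ico a b) :=
    fun a b => (hFanti.locallyIntegrable.integrableOn_isCompact isCompact_Icc).mono_set
      Set.Ico_subset_Icc_self
  -- key step inequality
  have hstep : ∀ a b : ℝ, 0 ≤ a → a ≤ b →
      (F b - C₀) * (T + (b - a)) ≤ T * (F a - C₀) := by
    intro a b ha hab
    have hb : 0 ≤ b := ha.trans hab
    have hIcoInt : IntegrableOn E (Set.Ico a b) :=
      (hEint a ha).mono_set Set.Ico_subset_Ici_self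
    have hFab : F a = (∫ s in Set.Ico a b, E s) + F b := by
      rw [hFt a ha, hFt b hb]; exact hsplit a b ha hab
    have hFsubInt : IntegrableOn (fun s => F s - C₀) (Set.Ico a b) :=
      (hFint a b).sub (integrableOn_const measure_Ico_lt_top.ne)
    have h1 : (b - a) * (F b - C₀) ≤ ∫ s in Set.Ico a b, (F s - C₀) := by
      have := setIntegral_mono_on
        (integrableOn_const measure_Ico_lt_top.ne) hFsubInt measurableSet_Ico
        (fun s hs => sub_le_sub_right (hFanti hs.2.le) C₀)
      simpa [Real.volume_Ico, ENNReal.toReal_ofReal (sub_nonneg.2 hab), max_eq_left (sub_nonneg.2 hab)] using this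
    have h2 : (∫ s in Set.Ico a b, (F s - C₀)) ≤ ∫ s in Set.Ico a b, T * E s := by
      refine setIntegral_mono_on hFsubInt (hIcoInt.const_mul T) measurableSet_Ico ?_
      intro s hs
      have hs0 : 0 ≤ s := ha.trans hs.1
      have := hyp s hs0
      rw [← hFt s hs0] at this
      linarith
    have h3 : (∫ s in Set.Ico a b, T * E s) = T * (F a - F b) := by
      rw [integral_const_mul]
      have : (∫ s in Set.Ico a b, E s) = F a - F b := by linarith [hFab]
      rw [this]
    nlinarith [h1.trans (h2.trans_eq h3)]
  -- iterate
  intro t ht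
  rw [← hFt t ht]
  set H0 : ℝ := F 0 - C₀ with hH0
  have hiter : ∀ n : ℕ, 1 ≤ n → F t - C₀ ≤ (T / (T + t / n)) ^ n * H0 := by
    intro n hn
    have hn0 : (0:ℝ) < n := by exact_mod_cast hn
    have hh0 : 0 ≤ t / n := div_nonneg ht hn0.le
    have hc0 : 0 < T + t / n := by linarith
    have key : ∀ k : ℕ, F (k * (t / n)) - C₀ ≤ (T / (T + t / n)) ^ k * H0 := by
      intro k
      induction k with
      | zero => simp [hH0]
      | succ k ih =>
        have hk0 : (0:ℝ) ≤ k * (t / n) := by positivity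
        have hk1 : (k:ℝ) * (t / n) ≤ (k + 1 : ℕ) * (t / n) := by
          push_cast; nlinarith
        have hs := hstep (k * (t / n)) ((k + 1 : ℕ) * (t / n)) hk0 hk1
        have hdiff : ((k + 1 : ℕ) : ℝ) * (t / n) - k * (t / n) = t / n := by
          push_cast; ring
        rw [hdiff] at hs
        have : F ((k + 1 : ℕ) * (t / n)) - C₀ ≤ (T / (T + t / n)) * (F (k * (t / n)) - C₀) := by
          rw [div_mul_eq_mul_div, le_div_iff₀ hc0]
          linarith
        calc F ((k + 1 : ℕ) * (t / n)) - C₀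
            ≤ (T / (T + t / n)) * (F (k * (t / n)) - C₀) := this
          _ ≤ (T / (T + t / n)) * ((T / (T + t / n)) ^ k * H0) := by
              apply mul_le_mul_of_nonneg_left ih (by positivity)
          _ = (T / (T + t / n)) ^ (k + 1) * H0 := by ring
    have := key n
    rwa [show (n : ℝ) * (t / n) = t by field_simp] at this
  -- limit
  have hlim : Tendsto (fun n : ℕ => (T / (T + t / n)) ^ n * H0) atTop
      (𝓝 (Real.exp (-(t / T)) * H0)) := by
    have h1 : Tendsto (fun n : ℕ => ((1 + (t / T) / n) ^ n)⁻¹) atTop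
        (𝓝 (Real.exp (t / T))⁻¹) :=
      (Real.tendsto_one_add_div_pow_exp (t / T)).inv₀ (Real.exp_ne_zero _)
    rw [← Real.exp_neg] at h1
    refine (h1.mul_const H0).congr (fun n => ?_)
    congr 1
    rcases Nat.eq_zero_or_pos n with h | h
    · simp [h]
    · have hn0 : (0:ℝ) < n := by exact_mod_cast h
      have hc0 : 0 < T + t / n := by positivity
      rw [← inv_pow]
      congr 1
      rw [eq_div_iff hc0.ne', inv_mul_eq_div, div_eq_iff]
      · field_simp
      · positivity
  have hle : F t - C₀ ≤ Real.exp (-(t / T)) * H0 := by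
    refine ge_of_tendsto hlim ?_
    filter_upwards [eventually_ge_atTop 1] with n hn using hiter n hn
  have hH0le : H0 ≤ T * E 0 := by
    have := hyp 0 le_rfl
    rw [← hFt 0 le_rfl] at this
    simp [hH0]; linarith
  have hexp : 0 < Real.exp (-(t / T)) := Real.exp_pos _
  have : Real.exp (-(t / T)) * H0 ≤ Real.exp (-(t / T)) * (T * E 0) :=
    mul_le_mul_of_nonneg_left hH0le hexp.le
  rw [neg_div] at *
  linarith
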